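/- Let F : ℝⁿ → ℝⁿ be continuous, let h₁,…,h_p : ℝⁿ → ℝ be continuously differentiable, fix r ∈ {1,…,p}, and define the pivot function h̃(x) := max^{(r)}(h₁(x),…,h_p(x)) (the r-th largest value) and the combinatorial set C̃ := {x ∈ ℝⁿ : h̃(x) ≥ 0}. Let θ : ℝⁿ → [0,∞) be continuous, let ρ : ℝ → ℝ be continuous and positive definite, and let α : ℝ → ℝ be extended class-K and locally Lipschitz. Suppose there is an open set D ⊇ C̃ such that for every j ∈ {1,…,p} and every x ∈ D: ⟨∇h_j(x), F(x)⟩ ≥ −α(h_j(x)) − θ(x)·ρ(h_j(x) − h̃(x)). Then every solution x(·) of ẋ = F(x) on [0,∞) with x(0) ∈ C̃ satisfies x(t) ∈ C̃ for all t ≥ 0; equivalently, at least r of the values h₁(x(t)),…,h_p(x(t)) are nonnegative for all t ≥ 0. -/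

import Mathlib

open scoped RealInnerProductSpace

/-- The `r`-th largest value among `w 0, …, w (p-1)`: the maximum over all subsets
`S ⊆ Fin p` with `|S| = r` of `min_{j ∈ S} w j`. -/
noncomputable def rthMax {p : ℕ} (r : ℕ) (w : Fin p → ℝ) : ℝ :=
  sSup {m : ℝ | ∃ S : Finset (Fin p), S.card = r ∧ m = sInf (w '' ↑S)}

/-- An extended class-K function: continuous, strictly increasing, vanishing at `0`. -/
def IsClassKe (α : ℝ → ℝ) : Prop :=
  Continuous α ∧ StrictMono α ∧ α 0 = 0

/-- A positive definite function: nonnegative, vanishing exactly at `0`. -/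
def IsPosDef (ρ : ℝ → ℝ) : Prop :=
  (∀ s : ℝ, 0 ≤ ρ s) ∧ ρ 0 = 0 ∧ ∀ s : ℝ, s ≠ 0 → 0 < ρ s

section RthMax

variable {p r : ℕ}

lemma powersetCard_univ_nonempty (hrp : r ≤ p) :
    (Finset.univ.powersetCard r : Finset (Finset (Fin p))).Nonempty := by
  obtain ⟨S, hS, hSc⟩ := Finset.exists_subset_card_eq
    (s := (Finset.univ : Finset (Fin p))) (n := r) (by simpa using hrp)
  exact ⟨S, Finset.mem_powersetCard.2 ⟨hS, hSc⟩⟩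

lemma card_nonempty (hr1 : 1 ≤ r) {S : Finset (Fin p)} (hS : S.card = r) : S.Nonempty :=
  Finset.card_pos.1 (hS ▸ hr1)

lemma sInf_image_coe {S : Finset (Fin p)} (hS : S.Nonempty) (w : Fin p → ℝ) :
    sInf (w '' ↑S) = S.inf' hS w := (Finset.inf'_eq_csInf_image S hS w).symm

lemma rthMax_eq_sup' (hr1 : 1 ≤ r) (hrp : r ≤ p) (w : Fin p → ℝ) :
    rthMax r w = (Finset.univ.powersetCard r : Finset (Finset (Fin p))).sup'
      (powersetCard_univ_nonempty hrp) (fun S => sInf (w '' ↑S)) := by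
  rw [Finset.sup'_eq_csSup_image]
  unfold rthMax
  congr 1
  ext m
  simp only [Set.mem_setOf_eq, Set.mem_image, Finset.mem_coe, Finset.mem_powersetCard]
  constructor
  · rintro ⟨S, hc, rfl⟩; exact ⟨S, ⟨Finset.subset_univ S, hc⟩, rfl⟩
  · rintro ⟨S, ⟨-, hc⟩, rfl⟩; exact ⟨S, hc, rfl⟩

lemma sInf_le_rthMax (hr1 : 1 ≤ r) (hrp : r ≤ p) (w : Fin p → ℝ)
    {S : Finset (Fin p)} (hS : S.card = r) :
    sInf (w '' ↑S) ≤ rthMax r w := by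
  rw [rthMax_eq_sup' hr1 hrp]
  exact Finset.le_sup' (f := fun S : Finset (Fin p) => sInf (w '' ↑S))
    (Finset.mem_powersetCard.2 ⟨Finset.subset_univ S, hS⟩)

lemma rthMax_attained (hr1 : 1 ≤ r) (hrp : r ≤ p) (w : Fin p → ℝ) :
    ∃ S : Finset (Fin p), S.card = r ∧ rthMax r w = sInf (w '' ↑S) := by
  obtain ⟨S, hSmem, hSeq⟩ := Finset.exists_mem_eq_sup'
    (powersetCard_univ_nonempty hrp) (fun S : Finset (Fin p) => sInf (w '' ↑S))
  exact ⟨S, (Finset.mem_powersetCard.1 hSmem).2, by rw [rthMax_eq_sup' hr1 hrp, hSeq]⟩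

lemma sInf_image_le {S : Finset (Fin p)} (hS : S.Nonempty) (w : Fin p → ℝ)
    {j : Fin p} (hj : j ∈ S) : sInf (w '' ↑S) ≤ w j := by
  rw [sInf_image_coe hS]; exact Finset.inf'_le _ hj

lemma exists_sInf_image_eq {S : Finset (Fin p)} (hS : S.Nonempty) (w : Fin p → ℝ) :
    ∃ j ∈ S, sInf (w '' ↑S) = w j := by
  obtain ⟨j, hj, hje⟩ := Finset.exists_mem_eq_inf' hS w
  exact ⟨j, hj, by rw [sInf_image_coe hS, hje]⟩

lemma rthMax_nonneg_iff (hr1 : 1 ≤ r) (hrp : r ≤ p) (w : Fin p → ℝ) :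
    0 ≤ rthMax r w ↔ r ≤ (Finset.univ.filter (fun j : Fin p => 0 ≤ w j)).card := by
  constructor
  · intro h0
    obtain ⟨S, hSc, hSeq⟩ := rthMax_attained hr1 hrp w
    have hsub : S ⊆ Finset.univ.filter (fun j : Fin p => 0 ≤ w j) := by
      intro j hj
      refine Finset.mem_filter.2 ⟨Finset.mem_univ j, ?_⟩
      exact le_trans (hSeq ▸ h0) (sInf_image_le (card_nonempty hr1 hSc) w hj)
    calc r = S.card := hSc.symm
      _ ≤ _ := Finset.card_le_card hsub
  · intro hcard
    obtain ⟨S, hSsub, hSc⟩ := Finset.exists_subset_card_eq hcard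
    refine le_trans ?_ (sInf_le_rthMax hr1 hrp w hSc)
    obtain ⟨j, hj, hje⟩ := exists_sInf_image_eq (card_nonempty hr1 hSc) w
    rw [hje]
    exact (Finset.mem_filter.1 (hSsub hj)).2

lemma rthMax_continuous {X : Type*} [TopologicalSpace X] (hr1 : 1 ≤ r) (hrp : r ≤ p)
    (h : Fin p → X → ℝ) (hc : ∀ j, Continuous (h j)) :
    Continuous (fun y => rthMax r (fun j => h j y)) := by
  have heq : (fun y => rthMax r (fun j => h j y)) =
      fun y => (Finset.univ.powersetCard r : Finset (Finset (Fin p))).sup'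
        (powersetCard_univ_nonempty hrp) (fun S => sInf ((fun j => h j y) '' ↑S)) := by
    funext y; exact rthMax_eq_sup' hr1 hrp _
  rw [heq]
  apply Continuous.finset_sup'_apply (f := fun (S : Finset (Fin p)) (y : X) =>
    sInf ((fun j => h j y) '' ↑S))
  intro S hS
  have hSne : S.Nonempty := card_nonempty hr1 (Finset.mem_powersetCard.1 hS).2
  have : (fun y => sInf ((fun j => h j y) '' ↑S)) =
      fun y => S.inf' hSne (fun j => h j y) := by
    funext y; exact sInf_image_coe hSne _
  rw [this]
  exact Continuous.finset_inf'_apply hSne (fun j _ => hc j)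

end RthMax

section Dini

variable {n p : ℕ}

/-- Dini-type lower bound on the slope of `t ↦ rthMax r (h · (x t))` along a trajectory. -/
lemma dini_step
    (F : EuclideanSpace ℝ (Fin n) → EuclideanSpace ℝ (Fin n))
    (h : Fin p → EuclideanSpace ℝ (Fin n) → ℝ) (hh : ∀ j, ContDiff ℝ 1 (h j))
    {r : ℕ} (hr1 : 1 ≤ r) (hrp : r ≤ p)
    (θ : EuclideanSpace ℝ (Fin n) → ℝ)
    (ρ : ℝ → ℝ) (hρ : IsPosDef ρ)
    (α : ℝ → ℝ)
    {D : Set (EuclideanSpace ℝ (Fin n))}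
    (hbarrier : ∀ j : Fin p, ∀ x ∈ D,
      ⟪gradient (h j) x, F x⟫ ≥
        -α (h j x) - θ x * ρ (h j x - rthMax r (fun i => h i x)))
    {x : ℝ → EuclideanSpace ℝ (Fin n)} {s : ℝ}
    (hxd : HasDerivAt x (F (x s)) s) (hxD : x s ∈ D)
    {ε : ℝ} (hε : 0 < ε) :
    ∀ᶠ z in nhdsWithin s (Set.Ioi s),
      -α (rthMax r (fun j => h j (x s))) - ε <
        (z - s)⁻¹ * (rthMax r (fun j => h j (x z)) - rthMax r (fun j => h j (x s))) := by
  set g : ℝ → ℝ := fun t => rthMax r (fun j => h j (x t)) with hg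
  set m : ℝ := g s with hm
  set c : ℝ := -α m - ε with hc
  obtain ⟨S, hSc, hSeq⟩ := rthMax_attained hr1 hrp (fun j => h j (x s))
  have hSne : S.Nonempty := card_nonempty hr1 hSc
  -- each j ∈ S satisfies the eventual slope bound
  have hall : ∀ᶠ z in nhdsWithin s (Set.Ioi s), ∀ j ∈ S, c * (z - s) < h j (x z) - m := by
    rw [Finset.eventually_all]
    intro j hj
    have hjm : m ≤ h j (x s) := hSeq.trans_le (sInf_image_le hSne (fun j => h j (x s)) hj)
    rcases eq_or_lt_of_le hjm with hjm' | hjm'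
    · -- active constraint: use the barrier condition on the derivative
      set d : ℝ := fderiv ℝ (h j) (x s) (F (x s)) with hd
      have hder : HasDerivAt (fun z => h j (x z)) d s :=
        (((hh j).differentiable one_ne_zero).differentiableAt.hasFDerivAt).comp_hasDerivAt s hxd
      have hinner : ⟪gradient (h j) (x s), F (x s)⟫ = d := by
        rw [gradient]
        exact InnerProductSpace.toDual_symm_apply
      have hdge : -α m ≤ d := by
        have hb := hbarrier j (x s) hxD
        rw [hinner] at hb
        have : h j (x s) - rthMax r (fun i => h i (x s)) = 0 := by
          rw [← hjm']; simp [hm, hg]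
        rw [this, hρ.2.1, mul_zero, ← hjm'] at hb
        linarith
      have hslope : ∀ᶠ z in nhdsWithin s (Set.Ioi s),
          d - ε < slope (fun z => h j (x z)) s z := by
        have ht := hasDerivAt_iff_tendsto_slope.1 hder
        have hmem : {y : ℝ | d - ε < y} ∈ nhds d := by
          apply Ioi_mem_nhds; linarith
        have := ht hmem
        exact nhdsWithin_mono s (fun z hz => Set.mem_compl_singleton_iff.2 (ne_of_gt hz)) this
      filter_upwards [hslope, self_mem_nhdsWithin] with z hz hzs
      have hzs' : (0:ℝ) < z - s := sub_pos.2 hzs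
      have : slope (fun z => h j (x z)) s z = (z - s)⁻¹ * (h j (x z) - h j (x s)) := by
        rw [slope_def_field]; field_simp
      rw [this] at hz
      have h1 : c < (z - s)⁻¹ * (h j (x z) - h j (x s)) := by
        have : c ≤ d - ε := by rw [hc]; linarith
        linarith
      have h2 : c * (z - s) < h j (x z) - h j (x s) := by
        have := (lt_div_iff₀ hzs').1 (by rw [div_eq_inv_mul]; exact h1)
        linarith [this]
      calc c * (z - s) < h j (x z) - h j (x s) := h2
        _ ≤ h j (x z) - m := by linarith
    · -- inactive constraint: continuity keeps it above m by a margin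
      set κ : ℝ := (h j (x s) - m) / 2 with hκ
      have hκ0 : 0 < κ := by rw [hκ]; linarith
      have hcont : ContinuousAt (fun z => h j (x z)) s :=
        ((hh j).continuous.continuousAt).comp hxd.continuousAt
      have ev1 : ∀ᶠ z in nhds s, m + κ < h j (x z) :=
        hcont.eventually (eventually_gt_nhds (by rw [hκ]; linarith))
      have ev2 : ∀ᶠ z in nhdsWithin s (Set.Ioi s), z - s < κ / (|c| + 1) := by
        have : Set.Ioo s (s + κ / (|c| + 1)) ∈ nhdsWithin s (Set.Ioi s) := by
          apply Ioo_mem_nhdsGT_of_mem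
          constructor
          · exact le_refl s
          · have : 0 < κ / (|c| + 1) := div_pos hκ0 (by positivity)
            linarith
        filter_upwards [this] with z hz
        linarith [hz.2]
      filter_upwards [ev1.filter_mono nhdsWithin_le_nhds, ev2, self_mem_nhdsWithin]
        with z h1 h2 h3
      have hzs' : (0:ℝ) < z - s := sub_pos.2 h3
      have hle : c * (z - s) ≤ |c| * (z - s) := by
        apply mul_le_mul_of_nonneg_right (le_abs_self c) (le_of_lt hzs')
      have : |c| * (z - s) < κ := by
        have habs : (0:ℝ) ≤ |c| := abs_nonneg c
        have h4 : (z - s) * (|c| + 1) < κ :=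
          (lt_div_iff₀ (by positivity : (0:ℝ) < |c| + 1)).1 h2
        nlinarith
      linarith
  filter_upwards [hall, self_mem_nhdsWithin] with z hz hzs
  have hzs' : (0:ℝ) < z - s := sub_pos.2 hzs
  have hge : sInf ((fun j => h j (x z)) '' ↑S) ≤ g z :=
    sInf_le_rthMax hr1 hrp (fun j => h j (x z)) hSc
  obtain ⟨j, hj, hje⟩ := exists_sInf_image_eq hSne (fun j => h j (x z))
  have h1 : c * (z - s) < g z - m := by
    have := hz j hj
    have : c * (z - s) < h j (x z) - m := this
    rw [hje] at hge
    linarith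
  have h2 := mul_lt_mul_of_pos_left h1 (inv_pos.2 hzs')
  have h3 : (z - s)⁻¹ * (c * (z - s)) = c := by field_simp
  rw [h3] at h2
  exact h2

end Dini

/-- Lemma 4 (combinatorial CBF forward invariance, closed-loop form): the combinatorial
set `C̃ = {x | max^{(r)}_j h_j(x) ≥ 0}` is forward invariant, i.e. at least `r` of the
`p` barrier functions stay nonnegative along closed-loop trajectories. -/
theorem combinatorial_cbf_forward_invariance {n p : ℕ}
    (F : EuclideanSpace ℝ (Fin n) → EuclideanSpace ℝ (Fin n))
    (hF : Continuous F)
    (h : Fin p → EuclideanSpace ℝ (Fin n) → ℝ) (hh : ∀ j, ContDiff ℝ 1 (h j))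
    (r : ℕ) (hr1 : 1 ≤ r) (hrp : r ≤ p)
    (θ : EuclideanSpace ℝ (Fin n) → ℝ) (hθ : Continuous θ) (hθ0 : ∀ x, 0 ≤ θ x)
    (ρ : ℝ → ℝ) (hρc : Continuous ρ) (hρ : IsPosDef ρ)
    (α : ℝ → ℝ) (hα : IsClassKe α) (hαlip : LocallyLipschitz α)
    (D : Set (EuclideanSpace ℝ (Fin n))) (hD : IsOpen D)
    (hCD : {x : EuclideanSpace ℝ (Fin n) | 0 ≤ rthMax r (fun j => h j x)} ⊆ D)
    (hbarrier : ∀ j : Fin p, ∀ x ∈ D,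
      ⟪gradient (h j) x, F x⟫ ≥
        -α (h j x) - θ x * ρ (h j x - rthMax r (fun i => h i x))) :
    ∀ x : ℝ → EuclideanSpace ℝ (Fin n),
      (∀ t : ℝ, 0 ≤ t → HasDerivAt x (F (x t)) t) →
      0 ≤ rthMax r (fun j => h j (x 0)) →
      ∀ t : ℝ, 0 ≤ t →
        0 ≤ rthMax r (fun j => h j (x t)) ∧
        r ≤ (Finset.univ.filter (fun j : Fin p => 0 ≤ h j (x t))).card := by
  intro x hx hx0
  set g : ℝ → ℝ := fun s => rthMax r (fun j => h j (x s)) with hgdef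
  have hxc : ∀ s : ℝ, 0 ≤ s → ContinuousAt x s := fun s hs => (hx s hs).continuousAt
  have hgc : ∀ s : ℝ, 0 ≤ s → ContinuousAt g s := fun s hs =>
    (rthMax_continuous hr1 hrp h (fun j => (hh j).continuous)).continuousAt.comp (hxc s hs)
  have key : ∀ s : ℝ, 0 ≤ s → 0 ≤ g s := by
    by_contra hcon
    push_neg at hcon
    obtain ⟨t₁, ht₁0, ht₁⟩ := hcon
    set A : Set ℝ := {s | s ∈ Set.Icc 0 t₁ ∧ 0 ≤ g s} with hA
    have hA0 : (0:ℝ) ∈ A := ⟨⟨le_refl 0, ht₁0⟩, hx0⟩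
    have hAne : A.Nonempty := ⟨0, hA0⟩
    have hAbdd : BddAbove A := ⟨t₁, fun s hs => hs.1.2⟩
    have hAclosed : IsClosed A := by
      have hgco : ContinuousOn g (Set.Icc 0 t₁) := fun s hs =>
        (hgc s hs.1).continuousWithinAt
      have hAeq : A = Set.Icc 0 t₁ ∩ g ⁻¹' (Set.Ici 0) := by
        ext s
        simp only [hA, Set.mem_setOf_eq, Set.mem_inter_iff, Set.mem_preimage, Set.mem_Ici]
      rw [hAeq]
      exact hgco.preimage_isClosed_of_isClosed isClosed_Icc isClosed_Ici
    set t₀ := sSup A with ht₀def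
    have ht₀A : t₀ ∈ A := hAclosed.csSup_mem hAne hAbdd
    have ht₀0 : 0 ≤ t₀ := ht₀A.1.1
    have ht₀le : t₀ ≤ t₁ := ht₀A.1.2
    have hgt₀ : 0 ≤ g t₀ := ht₀A.2
    have ht₀lt : t₀ < t₁ := lt_of_le_of_ne ht₀le (by
      intro heq
      rw [heq] at hgt₀
      exact absurd hgt₀ (not_le.2 ht₁))
    have hneg : ∀ s, t₀ < s → s ≤ t₁ → g s < 0 := by
      intro s hs1 hs2
      by_contra hge
      push_neg at hge
      have hsA : s ∈ A := ⟨⟨le_trans ht₀0 (le_of_lt hs1), hs2⟩, hge⟩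
      exact absurd (le_csSup hAbdd hsA) (not_le.2 hs1)
    have hxt₀D : x t₀ ∈ D := hCD hgt₀
    obtain ⟨δ, hδ0, hδ⟩ : ∃ δ > 0, ∀ s, |s - t₀| < δ → x s ∈ D := by
      have hnh : x ⁻¹' D ∈ nhds t₀ := (hxc t₀ ht₀0) (hD.mem_nhds hxt₀D)
      obtain ⟨δ, hδ0, hball⟩ := Metric.mem_nhds_iff.1 hnh
      exact ⟨δ, hδ0, fun s hs => hball (by simpa [Real.dist_eq] using hs)⟩
    set t₂ := min t₁ (t₀ + δ/2) with ht₂def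
    have ht₀t₂ : t₀ < t₂ := lt_min ht₀lt (by linarith)
    have ht₂t₁ : t₂ ≤ t₁ := min_le_left _ _
    have hmemD : ∀ s ∈ Set.Icc t₀ t₂, x s ∈ D := by
      intro s hs
      apply hδ
      have h1 : s ≤ t₀ + δ/2 := le_trans hs.2 (min_le_right _ _)
      have h2 : 0 ≤ s - t₀ := by linarith [hs.1]
      rw [abs_of_nonneg h2]; linarith
    set fh : ℝ → ℝ := fun s => max (-g s) 0 with hfh
    have hcont : ContinuousOn fh (Set.Icc t₀ t₂) := fun s hs =>
      ((hgc s (le_trans ht₀0 hs.1)).continuousWithinAt.neg.max continuousWithinAt_const)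
    have hslope : ∀ s ∈ Set.Ico t₀ t₂, ∀ rr : ℝ, (fun _ : ℝ => (0:ℝ)) s < rr →
        ∃ᶠ z in nhdsWithin s (Set.Ioi s), (z - s)⁻¹ * (fh z - fh s) < rr := by
      intro s hs rr hrr
      have hrr' : (0:ℝ) < rr := hrr
      have hs0 : 0 ≤ s := le_trans ht₀0 hs.1
      rcases le_or_gt (g s) 0 with hgs | hgs
      · have hd := dini_step F h hh hr1 hrp θ ρ hρ α hbarrier (hx s hs0)
          (hmemD s ⟨hs.1, le_of_lt hs.2⟩) hrr'
        apply Filter.Eventually.frequently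
        filter_upwards [hd, self_mem_nhdsWithin] with z hz hzs
        have hzs' : (0:ℝ) < z - s := sub_pos.2 hzs
        have hαle : α (g s) ≤ 0 := by
          have hmono := hα.2.1.monotone hgs
          rw [hα.2.2] at hmono; exact hmono
        have hfhs : fh s = -g s := max_eq_left (by linarith)
        have hub : fh z - fh s ≤ max (-(g z - g s)) 0 := by
          rcases le_total (-g z) 0 with hzc | hzc
          · have : fh z = 0 := max_eq_right hzc
            rw [this, hfhs]
            have : -0 + g s ≤ 0 := by linarith
            calc 0 - -g s = g s := by ring
              _ ≤ 0 := hgs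
              _ ≤ max (-(g z - g s)) 0 := le_max_right _ _
          · have : fh z = -g z := max_eq_left hzc
            rw [this, hfhs]
            calc -g z - -g s = -(g z - g s) := by ring
              _ ≤ max (-(g z - g s)) 0 := le_max_left _ _
        have hmul : (z - s)⁻¹ * (fh z - fh s) ≤
            max ((z - s)⁻¹ * (-(g z - g s))) ((z - s)⁻¹ * 0) := by
          rw [← mul_max_of_nonneg _ _ (le_of_lt (inv_pos.2 hzs'))]
          exact mul_le_mul_of_nonneg_left hub (le_of_lt (inv_pos.2 hzs'))
        refine lt_of_le_of_lt hmul (max_lt ?_ (by simpa using hrr'))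
        -- hz : -α (g s) - rr < (z - s)⁻¹ * (g z - g s)
        have : -rr < (z - s)⁻¹ * (g z - g s) := by
          have : -α (g s) - rr ≥ -rr - 0 := by linarith
          linarith [hz]
        calc (z - s)⁻¹ * (-(g z - g s)) = -((z - s)⁻¹ * (g z - g s)) := by ring
          _ < rr := by linarith
      · have hev : ∀ᶠ z in nhds s, 0 < g z := (hgc s hs0).eventually (eventually_gt_nhds hgs)
        apply Filter.Eventually.frequently
        filter_upwards [hev.filter_mono nhdsWithin_le_nhds] with z hz
        have hz0 : fh z = 0 := max_eq_right (by linarith)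
        have hs0' : fh s = 0 := max_eq_right (by linarith)
        rw [hz0, hs0']
        simpa using hrr'
    have hgron := le_gronwallBound_of_liminf_deriv_right_le (f := fh)
      (f' := fun _ : ℝ => (0:ℝ)) (δ := 0) (K := 0) (ε := 0) (a := t₀) (b := t₂)
      hcont hslope
      (by
        have : fh t₀ = max (-g t₀) 0 := rfl
        rw [this]
        exact max_le (by linarith) le_rfl)
      (fun s _ => by simp)
    have hfin := hgron t₂ ⟨le_of_lt ht₀t₂, le_refl t₂⟩
    rw [gronwallBound_K0] at hfin
    have hft₂ : fh t₂ ≤ 0 := by simpa using hfin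
    have hgt₂ : 0 ≤ g t₂ := by
      have : -g t₂ ≤ 0 := le_trans (le_max_left _ _) hft₂
      linarith
    exact absurd hgt₂ (not_le.2 (hneg t₂ ht₀t₂ ht₂t₁))
  intro t ht
  refine ⟨key t ht, ?_⟩
  exact (rthMax_nonneg_iff hr1 hrp (fun j => h j (x t))).1 (key t ht)
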